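/- Let ψ = φ + f be proper, ρ-weakly convex and lower semicontinuous with φ: ℝ^d → ℝ continuous and weakly convex and f proper convex lsc. Fix λ ∈ (0, ρ⁻¹), η_x > 0, and x ∈ ℝ^d, and set x̂ := prox_{λψ}(x). Then there exists v ∈ ∂φ(x̂) such that x̂ = prox_{η_x f}( η_x λ⁻¹ x − η_x v + (1 − η_x λ⁻¹) x̂ ). -/

import Mathlib

open scoped RealInnerProductSpace

set_option maxHeartbeats 1000000

theorem norm_add_smul' {d : ℕ} (u w : EuclideanSpace ℝ (Fin d)) (t : ℝ) :
    ‖u + t • w‖ ^ 2 = ‖u‖ ^ 2 + 2 * t * ⟪u, w⟫ + t ^ 2 * ‖w‖ ^ 2 := by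
  rw [norm_add_sq_real, real_inner_smul_right, norm_smul]
  simp [mul_pow, sq_abs]
  ring

theorem norm_combo' {d : ℕ} (z₁ z₂ : EuclideanSpace ℝ (Fin d)) (a b : ℝ) (hab : a + b = 1) :
    ‖a • z₁ + b • z₂‖ ^ 2 = a * ‖z₁‖ ^ 2 + b * ‖z₂‖ ^ 2 - a * b * ‖z₁ - z₂‖ ^ 2 := by
  have hb : b = 1 - a := by linarith
  subst hb
  have h0 : a • z₁ + (1 - a) • z₂ = z₂ + a • (z₁ - z₂) := by module
  have h1 : z₁ = z₂ + (1:ℝ) • (z₁ - z₂) := by module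
  have h2 := norm_add_smul' z₂ (z₁ - z₂) 1
  rw [← h1] at h2
  rw [h0, norm_add_smul', h2]
  ring

theorem sum_rule' {d : ℕ} (A : EuclideanSpace ℝ (Fin d) → ℝ)
    (f : EuclideanSpace ℝ (Fin d) → EReal)
    (hA : ConvexOn ℝ Set.univ A) (hAc : Continuous A)
    (hfbot : ∀ z, f z ≠ ⊥)
    (hfconv : ∀ x y : EuclideanSpace ℝ (Fin d), ∀ a b : ℝ, 0 ≤ a → 0 ≤ b → a + b = 1 →
      f (a • x + b • y) ≤ (a : EReal) * f x + (b : EReal) * f y)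
    (s xhat : EuclideanSpace ℝ (Fin d)) (rhat : ℝ) (hfx : f xhat = (rhat : EReal))
    (H : ∀ z, ((A xhat + rhat + ⟪s, z - xhat⟫ : ℝ) : EReal) ≤ ((A z : ℝ) : EReal) + f z) :
    ∃ v : EuclideanSpace ℝ (Fin d),
      (∀ z, A xhat + ⟪v, z - xhat⟫ ≤ A z) ∧
      (∀ z, ((rhat + ⟪s - v, z - xhat⟫ : ℝ) : EReal) ≤ f z) := by
  classical
  set C : EuclideanSpace ℝ (Fin d) → ℝ := fun z => A xhat + rhat + ⟪s, z - xhat⟫ with hC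
  -- affine property of C
  have hCaff : ∀ (z₁ z₂ : EuclideanSpace ℝ (Fin d)) (a b : ℝ), a + b = 1 →
      C (a • z₁ + b • z₂) = a * C z₁ + b * C z₂ := by
    intro z₁ z₂ a b hab
    have h0 : a • z₁ + b • z₂ - xhat = a • (z₁ - xhat) + b • (z₂ - xhat) := by
      have hb : b = 1 - a := by linarith
      subst hb; module
    simp only [hC, h0, inner_add_right, real_inner_smul_right]
    linear_combination (-(A xhat + rhat)) * hab
  set S : Set (EuclideanSpace ℝ (Fin d) × ℝ) := {p | A p.1 < p.2} with hS
  set T : Set (EuclideanSpace ℝ (Fin d) × ℝ) := {p | f p.1 ≤ ((C p.1 - p.2 : ℝ) : EReal)} with hT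
  have hSopen : IsOpen S := by
    have hc : Continuous fun p : EuclideanSpace ℝ (Fin d) × ℝ => A p.1 := by
      exact Continuous.comp hAc continuous_fst
    exact isOpen_lt hc continuous_snd
  have hSconv : Convex ℝ S := by
    intro p hp q hq a b ha hb hab
    simp only [hS, Set.mem_setOf_eq] at hp hq ⊢
    have hAin := hA.2 (Set.mem_univ p.1) (Set.mem_univ q.1) ha hb hab
    simp only [smul_eq_mul] at hAin
    simp only [Prod.smul_fst, Prod.smul_snd, Prod.fst_add, Prod.snd_add, smul_eq_mul]
    calc A (a • p.1 + b • q.1) ≤ a * A p.1 + b * A q.1 := hAin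
    _ < a * p.2 + b * q.2 := by
        rcases eq_or_lt_of_le ha with h | h
        · rcases eq_or_lt_of_le hb with h2 | h2
          · exfalso; rw [← h, ← h2] at hab; norm_num at hab
          · simp only [← h]; simpa using (mul_lt_mul_of_pos_left hq h2)
        · rcases eq_or_lt_of_le hb with h2 | h2
          · simp only [← h2]; simpa using (mul_lt_mul_of_pos_left hp h)
          · exact add_lt_add (mul_lt_mul_of_pos_left hp h) (mul_lt_mul_of_pos_left hq h2)
  have hTconv : Convex ℝ T := by
    intro p hp q hq a b ha hb hab
    simp only [hT, Set.mem_setOf_eq] at hp hq ⊢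
    -- f p.1, f q.1 are finite
    have hpt : f p.1 ≠ ⊤ := (lt_of_le_of_lt hp (EReal.coe_lt_top _)).ne
    have hqt : f q.1 ≠ ⊤ := (lt_of_le_of_lt hq (EReal.coe_lt_top _)).ne
    set rp := (f p.1).toReal with hrp
    set rq := (f q.1).toReal with hrq
    have hfp : f p.1 = (rp : EReal) := (EReal.coe_toReal hpt (hfbot _)).symm
    have hfq : f q.1 = (rq : EReal) := (EReal.coe_toReal hqt (hfbot _)).symm
    have hp' : rp ≤ C p.1 - p.2 := by rwa [hfp, EReal.coe_le_coe_iff] at hp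
    have hq' : rq ≤ C q.1 - q.2 := by rwa [hfq, EReal.coe_le_coe_iff] at hq
    have h1 := hfconv p.1 q.1 a b ha hb hab
    rw [hfp, hfq, ← EReal.coe_mul, ← EReal.coe_mul, ← EReal.coe_add] at h1
    refine h1.trans ?_
    rw [EReal.coe_le_coe_iff]
    have hCc := hCaff p.1 q.1 a b hab
    simp only [Prod.fst_add, Prod.snd_add, Prod.smul_fst, Prod.smul_snd, smul_eq_mul]
    rw [hCc]
    nlinarith [mul_le_mul_of_nonneg_left hp' ha, mul_le_mul_of_nonneg_left hq' hb]
  have hdisj : Disjoint S T := by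
    rw [Set.disjoint_left]
    intro p hp hpT
    simp only [hS, hT, Set.mem_setOf_eq] at hp hpT
    have h := H p.1
    have hpt : f p.1 ≠ ⊤ := (lt_of_le_of_lt hpT (EReal.coe_lt_top _)).ne
    set rp := (f p.1).toReal with hrp
    have hfp : f p.1 = (rp : EReal) := (EReal.coe_toReal hpt (hfbot _)).symm
    rw [hfp, EReal.coe_le_coe_iff] at hpT
    rw [hfp, ← EReal.coe_add, EReal.coe_le_coe_iff] at h
    simp only [hC] at hpT h
    linarith
  obtain ⟨L, c, hLS, hLT⟩ := geometric_hahn_banach_open hSconv hSopen hTconv hdisj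
  set α : ℝ := L (0, 1) with hα
  set l : EuclideanSpace ℝ (Fin d) →L[ℝ] ℝ := L.comp (ContinuousLinearMap.inl ℝ (EuclideanSpace ℝ (Fin d)) ℝ) with hl
  have hLdec : ∀ (z : EuclideanSpace ℝ (Fin d)) (r : ℝ), L (z, r) = l z + r * α := by
    intro z r
    have : (z, r) = (z, (0:ℝ)) + r • ((0:EuclideanSpace ℝ (Fin d)), (1:ℝ)) := by
      simp [Prod.ext_iff]
    rw [this, map_add, map_smul]
    simp [hl, hα, smul_eq_mul]
  -- (xhat, A xhat) ∈ T
  have hxT : ((xhat, A xhat) : EuclideanSpace ℝ (Fin d) × ℝ) ∈ T := by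
    simp only [hT, Set.mem_setOf_eq, hfx, hC]
    rw [EReal.coe_le_coe_iff]
    simp
  have hcT : c ≤ l xhat + A xhat * α := by
    have := hLT _ hxT; rwa [hLdec] at this
  -- α < 0
  have hαneg : α < 0 := by
    by_contra hcon
    push_neg at hcon
    rcases eq_or_lt_of_le hcon with h | h
    · have h1 : ∀ r : ℝ, A xhat < r → l xhat + r * α < c := by
        intro r hr
        have := hLS (xhat, r) (by simpa [hS] using hr)
        rwa [hLdec] at this
      have h4 := h1 (A xhat + 1) (by linarith)
      rw [← h] at h4
      simp at h4
      rw [← h] at hcT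
      simp at hcT
      linarith
    · set r := max (A xhat + 1) ((c - l xhat) / α + 1) with hr
      have hr1 : A xhat < r := lt_of_lt_of_le (by linarith) (le_max_left _ _)
      have := hLS (xhat, r) (by simpa [hS] using hr1)
      rw [hLdec] at this
      have hr2 : (c - l xhat) / α + 1 ≤ r := le_max_right _ _
      have : c - l xhat < r * α := by
        have h3 : (c - l xhat) / α < r := by linarith
        calc c - l xhat = ((c - l xhat) / α) * α := by field_simp
        _ < r * α := by exact mul_lt_mul_of_pos_right h3 h
      linarith
  -- epigraph side: ∀ z, l z + A z * α ≤ c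
  have hepi : ∀ z : EuclideanSpace ℝ (Fin d), l z + A z * α ≤ c := by
    intro z
    by_contra hcon
    push_neg at hcon
    -- pick r slightly above A z
    set ε := (l z + A z * α - c) / (-α) with hε
    have hεpos : 0 < ε := div_pos (by linarith) (by linarith)
    have := hLS (z, A z + ε/2) (by simp [hS]; linarith)
    rw [hLdec] at this
    have h2 : (A z + ε/2) * α = A z * α + (ε/2) * α := by ring
    have h3 : ε * (-α) = l z + A z * α - c := by
      rw [hε]; exact div_mul_cancel₀ _ (ne_of_gt (by linarith))
    nlinarith
  -- T side
  have hTside : ∀ z : EuclideanSpace ℝ (Fin d), ∀ rz : ℝ, f z = (rz : EReal) →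
      c ≤ l z + (C z - rz) * α := by
    intro z rz hz
    have hm : ((z, C z - rz) : EuclideanSpace ℝ (Fin d) × ℝ) ∈ T := by
      simp only [hT, Set.mem_setOf_eq, hz]
      rw [EReal.coe_le_coe_iff]; linarith
    have := hLT _ hm; rwa [hLdec] at this
  have hcx : c = l xhat + A xhat * α := le_antisymm hcT (hepi xhat)
  -- define v
  set w : EuclideanSpace ℝ (Fin d) := (InnerProductSpace.toDual ℝ (EuclideanSpace ℝ (Fin d))).symm l with hw
  have hwl : ∀ z : EuclideanSpace ℝ (Fin d), ⟪w, z⟫ = l z := fun z => InnerProductSpace.toDual_symm_apply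
  set β : ℝ := -α with hβ
  have hβpos : 0 < β := by simp [hβ]; linarith
  refine ⟨β⁻¹ • w, ?_, ?_⟩
  · intro z
    have h1 := hepi z
    rw [hcx] at h1
    have h2 : ⟪β⁻¹ • w, z - xhat⟫ = β⁻¹ * (l z - l xhat) := by
      simp only [inner_sub_left, inner_sub_right, real_inner_smul_left, hwl]; ring
    rw [h2]
    have : l z - l xhat ≤ β * (A z - A xhat) := by simp only [hβ]; nlinarith
    have h3 : β⁻¹ * (l z - l xhat) ≤ A z - A xhat := by
      calc β⁻¹ * (l z - l xhat) ≤ β⁻¹ * (β * (A z - A xhat)) :=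
            mul_le_mul_of_nonneg_left this (by positivity)
      _ = A z - A xhat := by field_simp
    linarith
  · intro z
    by_cases hzt : f z = ⊤
    · simp [hzt]
    set rz := (f z).toReal with hrz
    have hfz : f z = (rz : EReal) := (EReal.coe_toReal hzt (hfbot _)).symm
    rw [hfz, EReal.coe_le_coe_iff]
    have h1 := hTside z rz hfz
    rw [hcx] at h1
    have h2 : ⟪s - β⁻¹ • w, z - xhat⟫ = ⟪s, z - xhat⟫ - β⁻¹ * (l z - l xhat) := by
      simp only [inner_sub_left, inner_sub_right, real_inner_smul_left, hwl]; ring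
    rw [h2]
    -- from h1 : l xhat + A xhat * α ≤ l z + (C z - rz) * α, α = -β
    -- C z = A xhat + rhat + ⟪s, z-xhat⟫
    have hCz : C z = A xhat + rhat + ⟪s, z - xhat⟫ := rfl
    have h3 : β * (C z - rz - A xhat) ≤ l z - l xhat := by simp only [hβ] at *; nlinarith
    have h4 : C z - rz - A xhat ≤ β⁻¹ * (l z - l xhat) := by
      calc C z - rz - A xhat = β⁻¹ * (β * (C z - rz - A xhat)) := by field_simp
      _ ≤ β⁻¹ * (l z - l xhat) := mul_le_mul_of_nonneg_left h3 (by positivity)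
    rw [hCz] at h4
    linarith


/-- Convexity for extended-real-valued functions, via the secant inequality. -/
def ERealConvexOn {E : Type*} [AddCommGroup E] [Module ℝ E] (g : E → EReal) : Prop :=
  ∀ x y : E, ∀ a b : ℝ, 0 ≤ a → 0 ≤ b → a + b = 1 →
    g (a • x + b • y) ≤ (a : EReal) * g x + (b : EReal) * g y

/-- Fréchet subdifferential of a real-valued function. -/
def FrechetSubdiffR {d : ℕ} (g : EuclideanSpace ℝ (Fin d) → ℝ)
    (xbar : EuclideanSpace ℝ (Fin d)) : Set (EuclideanSpace ℝ (Fin d)) :=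
  {v | ∀ c : ℝ, 0 < c → ∀ᶠ x in nhds xbar, g xbar + ⟪v, x - xbar⟫ - c * ‖x - xbar‖ ≤ g x}

/-- `x̂ = prox_{λψ}(x)` (for `ψ = φ + f`) can be written as a prox
step of `f`: there is `v ∈ ∂φ(x̂)` with
`x̂ = prox_{η f}( η λ⁻¹ x - η v + (1 - η λ⁻¹) x̂ )`, where the latter is expressed
by the (strongly convex) minimization property characterizing the prox. -/
theorem stmt5 {d : ℕ} (φ : EuclideanSpace ℝ (Fin d) → ℝ)
    (f : EuclideanSpace ℝ (Fin d) → EReal) (ρφ ρ lam η : ℝ)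
    (hρφ : 0 ≤ ρφ) (hρ : 0 ≤ ρ)
    (hφcont : Continuous φ)
    (hφwc : ConvexOn ℝ Set.univ (fun z => φ z + ρφ / 2 * ‖z‖ ^ 2))
    (hfproper : (∀ z, f z ≠ ⊥) ∧ ∃ z, f z ≠ ⊤)
    (hfconv : ERealConvexOn f) (hflsc : LowerSemicontinuous f)
    (hψwc : ERealConvexOn (fun z => ((φ z : ℝ) : EReal) + f z + ((ρ / 2 * ‖z‖ ^ 2 : ℝ) : EReal)))
    (hlam : 0 < lam ∧ lam * ρ < 1) (hη : 0 < η)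
    (x xhat : EuclideanSpace ℝ (Fin d))
    (hxhat : ∀ z, ((φ xhat : ℝ) : EReal) + f xhat + ((1 / (2 * lam) * ‖xhat - x‖ ^ 2 : ℝ) : EReal)
              ≤ ((φ z : ℝ) : EReal) + f z + ((1 / (2 * lam) * ‖z - x‖ ^ 2 : ℝ) : EReal)) :
    ∃ v ∈ FrechetSubdiffR φ xhat,
      ∀ z, f xhat + ((1 / (2 * η) * ‖xhat - ((η * lam⁻¹) • x - η • v + (1 - η * lam⁻¹) • xhat)‖ ^ 2 : ℝ) : EReal)
        ≤ f z + ((1 / (2 * η) * ‖z - ((η * lam⁻¹) • x - η • v + (1 - η * lam⁻¹) • xhat)‖ ^ 2 : ℝ) : EReal) := by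
  obtain ⟨hfbot, z₀, hz₀⟩ : (∀ z, f z ≠ ⊥) ∧ ∃ z, f z ≠ ⊤ := hfproper
  obtain ⟨hlam0, hlamρ⟩ := hlam
  -- f xhat is finite
  have hfxt : f xhat ≠ ⊤ := by
    intro hT
    have h := hxhat z₀
    rw [hT] at h
    have hr0 : f z₀ = ((f z₀).toReal : EReal) := (EReal.coe_toReal hz₀ (hfbot _)).symm
    rw [hr0, EReal.coe_add_top, EReal.top_add_coe, top_le_iff,
        show ((φ z₀ : ℝ):EReal) + (((f z₀).toReal : ℝ):EReal) + ((1/(2*lam) * ‖z₀ - x‖^2 : ℝ):EReal)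
          = ((φ z₀ + (f z₀).toReal + 1/(2*lam)*‖z₀-x‖^2 : ℝ):EReal) by norm_cast] at h
    exact EReal.coe_ne_top _ h
  set rhat := (f xhat).toReal with hrhat
  have hfx : f xhat = (rhat : EReal) := (EReal.coe_toReal hfxt (hfbot _)).symm
  set s : EuclideanSpace ℝ (Fin d) := lam⁻¹ • (x - xhat) with hs
  set c₁ : ℝ := ρφ + ρ with hc₁
  have hc₁0 : 0 ≤ c₁ := by rw [hc₁]; linarith
  set A : EuclideanSpace ℝ (Fin d) → ℝ := fun z => φ z + c₁/2 * ‖z - xhat‖^2 with hA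
  have hAx : A xhat = φ xhat := by simp [hA]
  have hAconv : ConvexOn ℝ Set.univ A := by
    refine ⟨convex_univ, ?_⟩
    intro z₁ _ z₂ _ a b ha hb hab
    have h1 := hφwc.2 (Set.mem_univ z₁) (Set.mem_univ z₂) ha hb hab
    simp only [smul_eq_mul] at h1 ⊢
    simp only [hA]
    have h2 : a • z₁ + b • z₂ - xhat = a • (z₁ - xhat) + b • (z₂ - xhat) := by
      have hb' : b = 1 - a := by linarith
      subst hb'; module
    have h3 := norm_combo' z₁ z₂ a b hab
    have h4 : (z₁ - xhat) - (z₂ - xhat) = z₁ - z₂ := by abel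
    have h5 := norm_combo' (z₁ - xhat) (z₂ - xhat) a b hab
    rw [h4] at h5
    rw [h3] at h1
    rw [h2, h5]
    nlinarith [mul_nonneg (mul_nonneg ha hb) (sq_nonneg (‖z₁ - z₂‖))]
  have hAcont : Continuous A := by
    apply hφcont.add
    exact continuous_const.mul (((continuous_id.sub continuous_const).norm).pow 2)
  -- key inequality
  have hkey : ∀ z, ((A xhat + rhat + ⟪s, z - xhat⟫ : ℝ) : EReal) ≤ ((A z : ℝ) : EReal) + f z := by
    intro z
    by_cases hztop : f z = ⊤
    · rw [hztop]; simp
    set rz := (f z).toReal with hrz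
    have hfz : f z = (rz : EReal) := (EReal.coe_toReal hztop (hfbot _)).symm
    rw [hfz, ← EReal.coe_add, EReal.coe_le_coe_iff]
    set N := ‖z - xhat‖^2 with hN
    have hN0 : 0 ≤ N := by positivity
    have hstep : ∀ t : ℝ, 0 < t → t ≤ 1 →
        φ xhat + rhat + ⟪s, z - xhat⟫ ≤ φ z + rz + ρ/2 * N + t * (1/(2*lam)) * N := by
      intro t ht ht1
      set zt := xhat + t • (z - xhat) with hztdef
      have hconv := hψwc z xhat t (1-t) (le_of_lt ht) (by linarith) (by ring)
      have hztc : t • z + (1-t) • xhat = zt := by rw [hztdef]; module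
      beta_reduce at hconv
      rw [hztc, hfz, hfx] at hconv
      rw [show ((φ z : ℝ):EReal) + (rz:EReal) + ((ρ/2 * ‖z‖^2 :ℝ):EReal)
            = ((φ z + rz + ρ/2*‖z‖^2 : ℝ) : EReal) by norm_cast] at hconv
      rw [show ((φ xhat : ℝ):EReal) + (rhat:EReal) + ((ρ/2 * ‖xhat‖^2 :ℝ):EReal)
            = ((φ xhat + rhat + ρ/2*‖xhat‖^2 : ℝ) : EReal) by norm_cast] at hconv
      rw [← EReal.coe_mul, ← EReal.coe_mul, ← EReal.coe_add] at hconv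
      have hztt : f zt ≠ ⊤ := by
        intro hT
        rw [hT, EReal.coe_add_top, EReal.top_add_coe, top_le_iff] at hconv
        exact EReal.coe_ne_top _ hconv
      set ft := (f zt).toReal with hftdef
      have hfzt : f zt = (ft : EReal) := (EReal.coe_toReal hztt (hfbot _)).symm
      rw [hfzt] at hconv
      rw [show ((φ zt : ℝ):EReal) + (ft:EReal) + ((ρ/2 * ‖zt‖^2 :ℝ):EReal)
            = ((φ zt + ft + ρ/2*‖zt‖^2 : ℝ) : EReal) by norm_cast,
          EReal.coe_le_coe_iff] at hconv
      have hprox := hxhat zt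
      rw [hfx, hfzt] at hprox
      rw [show ((φ xhat : ℝ):EReal) + (rhat:EReal) + ((1/(2*lam) * ‖xhat - x‖^2 :ℝ):EReal)
            = ((φ xhat + rhat + 1/(2*lam)*‖xhat-x‖^2 : ℝ) : EReal) by norm_cast,
          show ((φ zt : ℝ):EReal) + (ft:EReal) + ((1/(2*lam) * ‖zt - x‖^2 :ℝ):EReal)
            = ((φ zt + ft + 1/(2*lam)*‖zt-x‖^2 : ℝ) : EReal) by norm_cast,
          EReal.coe_le_coe_iff] at hprox
      have e1 : ‖zt‖^2 = ‖xhat‖^2 + 2*t*⟪xhat, z - xhat⟫ + t^2*N := by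
        rw [hztdef, norm_add_smul', hN]
      have e2 : ‖z‖^2 = ‖xhat‖^2 + 2*⟪xhat, z - xhat⟫ + N := by
        have h := norm_add_smul' xhat (z - xhat) 1
        rw [show xhat + (1:ℝ) • (z - xhat) = z by module] at h
        rw [h, hN]; ring
      have e3 : ‖zt - x‖^2 = ‖xhat - x‖^2 + 2*t*⟪xhat - x, z - xhat⟫ + t^2*N := by
        have h := norm_add_smul' (xhat - x) (z - xhat) t
        rw [show xhat - x + t • (z - xhat) = zt - x by rw [hztdef]; module, ← hN] at h
        exact h
      have e4 : ⟪s, z - xhat⟫ = -(lam⁻¹ * ⟪xhat - x, z - xhat⟫) := by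
        rw [hs, show x - xhat = -(xhat - x) by abel, smul_neg, inner_neg_left,
            real_inner_smul_left]
      rw [e1, e2] at hconv
      rw [e3] at hprox
      have hlam2 : lam⁻¹ = 2*(1/(2*lam)) := by field_simp
      have hdiv : t * (φ xhat + rhat) ≤
          t * (φ z + rz + ρ/2*(1-t)*N + 2*(1/(2*lam))*⟪xhat - x, z - xhat⟫
               + t*(1/(2*lam))*N) := by
        nlinarith [hconv, hprox]
      have h6 := (mul_le_mul_iff_right₀ ht).mp hdiv
      rw [e4, hlam2]
      nlinarith [h6, mul_nonneg (mul_nonneg hρ ht.le) hN0]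
    have hmain : φ xhat + rhat + ⟪s, z - xhat⟫ ≤ φ z + rz + ρ/2 * N := by
      apply le_of_forall_pos_le_add
      intro ε hε
      set K := (1/(2*lam)) * N with hK
      have hK0 : 0 ≤ K := by positivity
      set t := min 1 (ε / (K+1)) with htdef
      have ht0 : 0 < t := lt_min one_pos (div_pos hε (by linarith))
      have ht1 : t ≤ 1 := min_le_left _ _
      have h := hstep t ht0 ht1
      have htK : t * (1/(2*lam)) * N ≤ ε := by
        have h1 : t ≤ ε/(K+1) := min_le_right _ _
        have h2 : t * K ≤ (ε/(K+1)) * K := mul_le_mul_of_nonneg_right h1 hK0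
        have h3 : (ε/(K+1)) * K ≤ ε := by
          rw [div_mul_eq_mul_div, div_le_iff₀ (by linarith : (0:ℝ) < K + 1)]
          nlinarith
        calc t * (1/(2*lam)) * N = t * K := by rw [hK]; ring
        _ ≤ ε := le_trans h2 h3
      linarith
    rw [hAx]
    simp only [hA]
    nlinarith [hmain, mul_nonneg hρφ hN0]
  obtain ⟨v, hv1, hv2⟩ := sum_rule' A f hAconv hAcont hfbot hfconv s xhat rhat hfx hkey
  have hvF : v ∈ FrechetSubdiffR φ xhat := by
    intro c hc
    have hδ : (0:ℝ) < 2*c/(c₁+1) := div_pos (by linarith) (by linarith)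
    filter_upwards [Metric.ball_mem_nhds xhat hδ] with z hz
    have h1 := hv1 z
    rw [hAx] at h1
    simp only [hA] at h1
    rw [Metric.mem_ball, dist_eq_norm] at hz
    have hn0 : 0 ≤ ‖z - xhat‖ := norm_nonneg _
    have hδeq : (2*c/(c₁+1)) * (c₁+1) = 2*c := div_mul_cancel₀ _ (by linarith)
    nlinarith [h1, mul_le_mul_of_nonneg_left hz.le (mul_nonneg hc₁0 hn0),
      mul_nonneg hn0 hδ.le, hz.le]
  refine ⟨v, hvF, ?_⟩
  intro z
  have hxp : xhat - ((η * lam⁻¹) • x - η • v + (1 - η * lam⁻¹) • xhat) = η • (v - s) := by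
    rw [hs]; module
  have hzp : z - ((η * lam⁻¹) • x - η • v + (1 - η * lam⁻¹) • xhat)
      = (z - xhat) + η • (v - s) := by
    rw [hs]; module
  rw [hxp, hzp, hfx]
  by_cases hztop : f z = ⊤
  · rw [hztop, EReal.top_add_coe]; exact le_top
  set rz := (f z).toReal with hrz
  have hfz : f z = (rz : EReal) := (EReal.coe_toReal hztop (hfbot _)).symm
  rw [hfz, ← EReal.coe_add, ← EReal.coe_add, EReal.coe_le_coe_iff]
  have h2 := hv2 z
  rw [hfz, EReal.coe_le_coe_iff] at h2
  have e1 : ‖η • (v - s)‖^2 = η^2 * ‖v - s‖^2 := by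
    rw [norm_smul]; simp [mul_pow, sq_abs]
  have e2 : ‖(z - xhat) + η • (v - s)‖^2
      = ‖z - xhat‖^2 + 2*η*⟪z - xhat, v - s⟫ + η^2*‖v - s‖^2 := norm_add_smul' _ _ _
  have e3 : ⟪s - v, z - xhat⟫ = -⟪z - xhat, v - s⟫ := by
    rw [show s - v = -(v - s) by abel, inner_neg_left, real_inner_comm]
  have hηinv : 1/(2*η) * (2*η) = 1 := by
    field_simp
  rw [e1, e2]
  have hM : 0 ≤ 1/(2*η) * ‖z - xhat‖^2 := by positivity
  nlinarith [h2, e3, hM, hηinv]
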